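/- Under the Lindahl equilibrium price conditions — Σ_j p^t_{ij} x_j = B/n' for every voter i ∈ W (where |W| = n'), and Σ_{i∈W} p^t_{ij} ≤ s_j for every candidate j — if S ⊆ W and an allocation z satisfies Σ_j p^t_{ij} z_j ≥ θ · B/n' for every i ∈ S, then |S| ≤ (n'/B) · (Σ_j s_j z_j)/θ. -/

import Mathlib

open Finset

/-- Bounding a deviating coalition via Lindahl equilibrium prices:
if every voter in `S` pays at least `θ · B/n'` for the deviating allocation `z`,
then `|S| ≤ (n'/B) · (∑ j, s j * z j) / θ`. -/
theorem coalition_size_bound_lindahl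
    {V C : Type*} [Fintype C] [DecidableEq V]
    (W : Finset V) (n' : ℕ) (hn' : n' = W.card) (hn'pos : 0 < n')
    (B : ℝ) (hB : 0 < B) (θ : ℝ) (hθ : 0 < θ)
    (s : C → ℝ) (hs : ∀ j, 0 < s j)
    (x : C → ℝ) (hx : ∀ j, 0 ≤ x j)
    (p : V → C → ℝ) (hp : ∀ i j, 0 ≤ p i j)
    (hendow : ∀ i ∈ W, ∑ j, p i j * x j = B / n')
    (hprice : ∀ j, ∑ i ∈ W, p i j ≤ s j)
    (S : Finset V) (hSW : S ⊆ W)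
    (z : C → ℝ) (hz : ∀ j, 0 ≤ z j)
    (hdev : ∀ i ∈ S, θ * B / n' ≤ ∑ j, p i j * z j) :
    (S.card : ℝ) ≤ (n' / B) * (∑ j, s j * z j) / θ := by
  have hn'R : (0:ℝ) < n' := by exact_mod_cast hn'pos
  have key : (S.card : ℝ) * (θ * B / n') ≤ ∑ j, s j * z j := by
    calc (S.card : ℝ) * (θ * B / n') = ∑ _i ∈ S, θ * B / n' := by
          rw [Finset.sum_const, nsmul_eq_mul]
      _ ≤ ∑ i ∈ S, ∑ j, p i j * z j := Finset.sum_le_sum hdev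
      _ = ∑ j, (∑ i ∈ S, p i j) * z j := by
          rw [Finset.sum_comm]
          exact Finset.sum_congr rfl fun j _ => (Finset.sum_mul ..).symm
      _ ≤ ∑ j, s j * z j := by
          refine Finset.sum_le_sum fun j _ => mul_le_mul_of_nonneg_right ?_ (hz j)
          exact le_trans (Finset.sum_le_sum_of_subset_of_nonneg hSW
            fun i _ _ => hp i j) (hprice j)
  rw [div_mul_eq_mul_div, div_div, le_div_iff₀ (by positivity)]
  calc (S.card : ℝ) * (B * θ) = ((S.card : ℝ) * (θ * B / n')) * n' := by
        field_simp
    _ ≤ (∑ j, s j * z j) * n' := by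
        exact mul_le_mul_of_nonneg_right key (le_of_lt hn'R)
    _ = (n':ℝ) * ∑ j, s j * z j := mul_comm _ _
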